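/- arXiv:2504.20787 — 2 statements merged into one kernel-verified Lean document; each statement's English description precedes it below -/
import Mathlib

section
/- Let p be a prime with p ≡ 3 (mod 4), and let ε > 1 be the fundamental unit of the real quadratic field ℚ(√(2p)) ⊆ ℝ. Then there exist integers a, b such that ε = 2a² + b²p + 2ab√(2p) (equivalently, √ε = a√2 + b√p), and moreover 2a² − b²p equals the Legendre symbol (2/p). -/
/-- `x` belongs to the real quadratic field `ℚ(√d) ⊆ ℝ`. -/
def memQuadField (d x : ℝ) : Prop := ∃ u v : ℚ, x = u + v * Real.sqrt d

/-- `x` is a unit of the ring of integers `𝓞` of `ℚ(√d) ⊆ ℝ`: it lies in `ℚ(√d)`, is a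
nonzero algebraic integer, and its inverse is also an algebraic integer. -/
def isQuadUnit (d x : ℝ) : Prop :=
  memQuadField d x ∧ IsIntegral ℤ x ∧ x ≠ 0 ∧ IsIntegral ℤ x⁻¹

/-- `ε` is a fundamental unit of `ℚ(√d) ⊆ ℝ`: it is a unit of the ring of integers and every
unit of the ring of integers equals `±εⁿ` for some integer `n`. -/
def isFundUnit (d ε : ℝ) : Prop :=
  isQuadUnit d ε ∧ ∀ x : ℝ, isQuadUnit d x → ∃ n : ℤ, x = ε ^ n ∨ x = -ε ^ n

open Polynomial


lemma sqrt_natCast_integral (D : ℕ) : IsIntegral ℤ (Real.sqrt D) := by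
  refine ⟨X ^ 2 - C (D : ℤ), monic_X_pow_sub_C _ (by norm_num), ?_⟩
  simp [Real.sq_sqrt (by positivity : (0:ℝ) ≤ (D:ℝ))]

lemma rat_cast_integral {u : ℚ} (h : IsIntegral ℤ ((u : ℝ))) : ∃ A : ℤ, u = A := by
  have : IsIntegral ℤ u := by
    rw [show ((u:ℝ)) = algebraMap ℚ ℝ u from rfl] at h
    exact (isIntegral_algebraMap_iff (algebraMap ℚ ℝ).injective).mp h
  obtain ⟨A, hA⟩ := IsIntegrallyClosed.isIntegral_iff.mp this
  exact ⟨A, hA.symm⟩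

lemma int_coeff (D : ℕ) (hirr : Irrational (Real.sqrt D)) (hsf : Squarefree D)
    (hD4 : D % 4 = 2) {u v : ℚ} (hint : IsIntegral ℤ ((u:ℝ) + v * Real.sqrt D)) :
    ∃ A B : ℤ, u = A ∧ v = B := by
  by_cases hv : v = 0
  · subst hv
    obtain ⟨A, hA⟩ := rat_cast_integral (by simpa using hint)
    exact ⟨A, 0, hA, by simp⟩
  set x : ℝ := (u:ℝ) + v * Real.sqrt D with hxdef
  have hxQ : IsIntegral ℚ x := hint.tower_top
  -- x is not rational
  have hxrange : x ∉ (algebraMap ℚ ℝ).range := by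
    rintro ⟨r, hr⟩
    rw [show (algebraMap ℚ ℝ) r = (r:ℝ) from rfl] at hr
    refine hirr ⟨(r - u) / v, ?_⟩
    push_cast
    rw [div_eq_iff (by exact_mod_cast hv : ((v:ℝ)) ≠ 0)]
    rw [hxdef] at hr
    linarith [hr]
  set q : ℚ[X] := C 1 * X ^ 2 + C (-(2*u)) * X + C (u ^ 2 - (D:ℚ) * v ^ 2) with hqdef
  have hqmonic : q.Monic := by
    unfold q
    unfold Polynomial.Monic
    rw [leadingCoeff_quadratic (one_ne_zero)]
  have hqdeg : q.natDegree = 2 := natDegree_quadratic one_ne_zero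
  have hqroot : aeval x q = 0 := by
    have h1 : x - (u:ℝ) = v * Real.sqrt D := by rw [hxdef]; ring
    have h2 : (x - (u:ℝ)) ^ 2 = (D:ℝ) * (v:ℝ) ^ 2 := by
      rw [h1, mul_pow, Real.sq_sqrt (by positivity : (0:ℝ) ≤ (D:ℝ))]
      ring
    simp only [hqdef, map_add, map_mul, map_pow, aeval_X, aeval_C, map_one, map_sub, map_neg,
      map_ofNat]
    rw [show (algebraMap ℚ ℝ) u = (u:ℝ) from rfl, show (algebraMap ℚ ℝ) v = (v:ℝ) from rfl,
      show (algebraMap ℚ ℝ) (D:ℚ) = (D:ℝ) by push_cast; rfl]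
    linear_combination h2
  have hdvd : minpoly ℚ x ∣ q := minpoly.dvd ℚ x hqroot
  have hdeg2 : 2 ≤ (minpoly ℚ x).natDegree := (minpoly.two_le_natDegree_iff hxQ).mpr hxrange
  have heq : q = minpoly ℚ x :=
    Polynomial.eq_of_monic_of_dvd_of_natDegree_le (minpoly.monic hxQ) hqmonic hdvd
      (by rw [hqdeg]; exact hdeg2)
  have hmap : minpoly ℚ x = (minpoly ℤ x).map (algebraMap ℤ ℚ) :=
    minpoly.isIntegrallyClosed_eq_field_fractions' ℚ hint
  -- coefficient 1 : -(2u) ; coefficient 0 : u^2 - D v^2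
  have hc1 : q.coeff 1 = -(2 * u) := by
    rw [hqdef]
    simp only [coeff_add, coeff_C_mul, coeff_X_pow, coeff_C, coeff_X]
    norm_num
  have hc0 : q.coeff 0 = u ^ 2 - (D:ℚ) * v ^ 2 := by
    rw [hqdef]
    simp only [coeff_add, coeff_C_mul, coeff_X_pow, coeff_C, coeff_X]
    norm_num
  -- extract integer data from minpoly coefficients
  set A1 : ℤ := (minpoly ℤ x).coeff 1
  set A0 : ℤ := (minpoly ℤ x).coeff 0
  have hu2 : 2 * u = ((-A1 : ℤ) : ℚ) := by
    have : q.coeff 1 = ((A1 : ℤ) : ℚ) := by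
      rw [heq, hmap, Polynomial.coeff_map]; rfl
    rw [hc1] at this
    push_cast
    linarith [this]
  have hc0' : u ^ 2 - (D:ℚ) * v ^ 2 = ((A0 : ℤ) : ℚ) := by
    have : q.coeff 0 = ((A0 : ℤ) : ℚ) := by
      rw [heq, hmap, Polynomial.coeff_map]; rfl
    rw [hc0] at this
    exact this
  set A : ℤ := -A1 with hAdef
  set w : ℚ := 2 * v with hwdef
  have hD0 : (D:ℚ) ≠ 0 := by
    have : D ≠ 0 := by omega
    exact_mod_cast this
  have hDw : (D:ℚ) * w ^ 2 = ((A ^ 2 - 4 * A0 : ℤ) : ℚ) := by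
    push_cast
    push_cast at hu2
    rw [hwdef]
    linear_combination (2 * u + (A:ℚ)) * hu2 + (-4) * hc0'
  have hden1 : w.den = 1 := by
    have hw2 : w ^ 2 = ((A ^ 2 - 4 * A0 : ℤ) : ℚ) / ((D : ℤ) : ℚ) := by
      rw [eq_div_iff (by exact_mod_cast hD0)]
      push_cast
      push_cast at hDw
      linarith [hDw]
    have hdvd2 : ((w ^ 2).den : ℤ) ∣ (D : ℤ) := by
      rw [hw2, ← Rat.divInt_eq_div]
      exact Rat.den_dvd _ _
    rw [Rat.den_pow] at hdvd2
    have : w.den ^ 2 ∣ D := by exact_mod_cast hdvd2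
    have : w.den * w.den ∣ D := by rwa [pow_two] at this
    exact Nat.isUnit_iff.mp (hsf w.den this)
  set B : ℤ := w.num with hBdef
  have hwB : w = (B : ℚ) := by
    conv_lhs => rw [← Rat.num_div_den w, hden1]
    simp
    rfl
  have hZ : A ^ 2 - (D : ℤ) * B ^ 2 = 4 * A0 := by
    have := hDw
    rw [hwB] at this
    have h4 : ((A ^ 2 - (D:ℤ) * B ^ 2 : ℤ) : ℚ) = ((4 * A0 : ℤ) : ℚ) := by
      push_cast
      push_cast at this
      linarith [this]
    exact_mod_cast h4
  -- parity
  set E : ℕ := D / 2 with hEdef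
  have hDE : D = 2 * E ∧ E % 2 = 1 := by omega
  have hZE : A ^ 2 - 2 * (E : ℤ) * B ^ 2 = 4 * A0 := by
    rw [show ((D:ℤ)) = 2 * (E:ℤ) by exact_mod_cast congrArg (Nat.cast (R := ℤ)) hDE.1] at hZ
    linarith [hZ]
  have hEvenA : Even A := by
    by_contra hA
    have hodd : Odd (A ^ 2) := (Int.not_even_iff_odd.mp hA).pow
    have heven : Even (A ^ 2) := ⟨(E:ℤ) * B ^ 2 + 2 * A0, by linarith [hZE]⟩
    exact (Int.not_odd_iff_even.mpr heven) hodd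
  obtain ⟨a, ha⟩ := hEvenA
  have hEB : (E : ℤ) * B ^ 2 = 2 * (a ^ 2 - A0) := by
    rw [ha] at hZE; ring_nf at hZE ⊢; linarith [hZE]
  have hEvenB : Even B := by
    have h1 : Even ((E:ℤ) * B ^ 2) := ⟨a ^ 2 - A0, by linarith [hEB]⟩
    have hEodd : ¬ Even (E : ℤ) := by
      rw [Int.even_iff]
      omega
    rcases Int.even_mul.mp h1 with h | h
    · exact absurd h hEodd
    · exact (Int.even_pow.mp h).1
  obtain ⟨b, hb⟩ := hEvenB
  refine ⟨a, b, ?_, ?_⟩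
  · have h5 : 2 * u = ((a + a : ℤ) : ℚ) := by rw [hu2, ha]
    push_cast at h5
    linarith [h5]
  · have h5 : 2 * v = ((b + b : ℤ) : ℚ) := by rw [← hwdef, hwB, hb]
    push_cast at h5
    linarith [h5]


lemma sf_part_eq {a b A B : ℕ} (ha : Squarefree a) (hb : Squarefree b) (hA : A ≠ 0) (hB : B ≠ 0)
    (h : a * A ^ 2 = b * B ^ 2) : a = b := by
  have ha0 : a ≠ 0 := ha.ne_zero
  have hb0 : b ≠ 0 := hb.ne_zero
  refine Nat.eq_of_factorization_eq ha0 hb0 (fun q => ?_)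
  have hf := congrArg Nat.factorization h
  rw [Nat.factorization_mul ha0 (pow_ne_zero 2 hA), Nat.factorization_mul hb0 (pow_ne_zero 2 hB),
    Nat.factorization_pow, Nat.factorization_pow] at hf
  have h1 := DFunLike.congr_fun hf q
  simp only [Finsupp.add_apply, Finsupp.smul_apply, smul_eq_mul] at h1
  have h2 : a.factorization q ≤ 1 := ha.natFactorization_le_one q
  have h3 : b.factorization q ≤ 1 := hb.natFactorization_le_one q
  omega

lemma natCast_integral (n : ℕ) : IsIntegral ℤ ((n : ℝ)) :=
  ⟨X - C (n : ℤ), monic_X_sub_C _, by simp⟩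

-- no unit can square to the fundamental unit
lemma no_sqrt_unit (p : ℕ) (ε : ℝ) (hε : 1 < ε)
    (hfund : isFundUnit (2 * (p : ℝ)) ε) (X Y : ℕ)
    (hη : ((X:ℝ) + (Y:ℝ) * Real.sqrt (2 * (p:ℝ))) ^ 2 = ε) : False := by
  have hε0 : (0:ℝ) < ε := lt_trans one_pos hε
  set η : ℝ := (X:ℝ) + (Y:ℝ) * Real.sqrt (2 * (p:ℝ)) with hηdef
  have hcast : ((2 * p : ℕ) : ℝ) = 2 * (p : ℝ) := by push_cast; ring
  have hη0 : η ≠ 0 := by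
    intro h
    rw [h] at hη
    simp at hη
    rw [← hη] at hε0
    norm_num at hε0
  have hηint : IsIntegral ℤ η := by
    refine (natCast_integral X).add (IsIntegral.mul (natCast_integral Y) ?_)
    rw [← hcast]
    exact sqrt_natCast_integral (2 * p)
  have hεinvint : IsIntegral ℤ ε⁻¹ := hfund.1.2.2.2
  have hηinv : η⁻¹ = η * ε⁻¹ := by
    apply inv_eq_of_mul_eq_one_right
    rw [show η * (η * ε⁻¹) = η ^ 2 * ε⁻¹ by ring, hη]
    field_simp
  have hηunit : isQuadUnit (2 * (p:ℝ)) η := by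
    refine ⟨⟨(X : ℚ), (Y : ℚ), by push_cast; rfl⟩, hηint, hη0, ?_⟩
    rw [hηinv]
    exact hηint.mul hεinvint
  obtain ⟨n, hn | hn⟩ := hfund.2 η hηunit
  · have h2 : ε ^ (1:ℤ) = ε ^ (2 * n) := by
      calc ε ^ (1:ℤ) = ε := zpow_one ε
      _ = η ^ 2 := hη.symm
      _ = (ε ^ n) ^ 2 := by rw [hn]
      _ = ε ^ (2 * n) := by rw [← zpow_natCast (ε ^ n) 2, ← zpow_mul, mul_comm]; norm_num
    have := zpow_right_injective₀ hε0 (ne_of_gt hε) h2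
    omega
  · have h2 : ε ^ (1:ℤ) = ε ^ (2 * n) := by
      calc ε ^ (1:ℤ) = ε := zpow_one ε
      _ = η ^ 2 := hη.symm
      _ = (ε ^ n) ^ 2 := by rw [hn]; ring
      _ = ε ^ (2 * n) := by rw [← zpow_natCast (ε ^ n) 2, ← zpow_mul, mul_comm]; norm_num
    have := zpow_right_injective₀ hε0 (ne_of_gt hε) h2
    omega

-- legendre endgame, case c₁ = 2, c₂ = p : p*y² = 2x²+1
lemma legendre_neg (p : ℕ) [hp : Fact p.Prime] (hp4 : p % 4 = 3) (x y : ℕ)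
    (h : y ^ 2 * p = 2 * x ^ 2 + 1) : legendreSym p 2 = -1 := by
  have hmod : 2 * (x : ZMod p) ^ 2 = -1 := by
    have h1 := congrArg (fun n : ℕ => (n : ZMod p)) h
    push_cast at h1
    rw [ZMod.natCast_self] at h1
    simp at h1
    linear_combination -h1
  rw [show ((2:ℤ)) = ((2:ℕ):ℤ) by norm_num, legendreSym.eq_neg_one_iff']
  rintro ⟨r, hr⟩
  have hr2 : (2 : ZMod p) = r * r := by exact_mod_cast hr
  have : IsSquare (-1 : ZMod p) := by
    refine ⟨r * (x : ZMod p), ?_⟩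
    linear_combination (-1 : ZMod p) * hmod + (x : ZMod p) ^ 2 * hr2
  exact (ZMod.exists_sq_eq_neg_one_iff.mp this) hp4

-- legendre endgame, case c₁ = p, c₂ = 2 : 2y² = px²+1
lemma legendre_pos (p : ℕ) [hp : Fact p.Prime] (hp4 : p % 4 = 3) (x y : ℕ)
    (h : y ^ 2 * 2 = x ^ 2 * p + 1) : legendreSym p 2 = 1 := by
  have hmod : 2 * (y : ZMod p) ^ 2 = 1 := by
    have h1 := congrArg (fun n : ℕ => (n : ZMod p)) h
    push_cast at h1
    rw [ZMod.natCast_self] at h1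
    simp at h1
    linear_combination h1
  have hy0 : (y : ZMod p) ≠ 0 := by
    intro h0
    rw [h0] at hmod
    simp at hmod
  have h2ne : ((2:ℕ) : ZMod p) ≠ 0 := by
    rw [Ne, ZMod.natCast_eq_zero_iff]
    intro hdvd
    have := Nat.le_of_dvd (by norm_num) hdvd
    omega
  rw [show ((2:ℤ)) = ((2:ℕ):ℤ) by norm_num, legendreSym.eq_one_iff' p h2ne]
  refine ⟨((y : ZMod p))⁻¹, ?_⟩
  push_cast
  have hinv : ((y : ZMod p))⁻¹ * (y : ZMod p) = 1 := inv_mul_cancel₀ hy0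
  linear_combination ((y : ZMod p))⁻¹ ^ 2 * hmod - 2 * (((y : ZMod p))⁻¹ * (y : ZMod p) + 1) * hinv

lemma exists_TU (p : ℕ) [hp : Fact p.Prime] (hp4 : p % 4 = 3)
    (ε : ℝ) (hε : 1 < ε) (hfund : isFundUnit (2 * (p : ℝ)) ε)
    (hirr : Irrational (Real.sqrt ((2 * p : ℕ) : ℝ)))
    (hsf : Squarefree (2 * p)) (hD4 : (2 * p) % 4 = 2) :
    ∃ T U : ℤ, 1 ≤ T ∧ 1 ≤ U ∧ T ^ 2 - 2 * p * U ^ 2 = 1 ∧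
      ε = (T : ℝ) + (U : ℝ) * Real.sqrt (2 * (p : ℝ)) := by
  have hcast : ((2 * p : ℕ) : ℝ) = 2 * (p : ℝ) := by push_cast; ring
  have hε0 : (0:ℝ) < ε := lt_trans one_pos hε
  have hd0 : (0:ℝ) ≤ 2 * (p : ℝ) := by positivity
  obtain ⟨⟨u, v, hx⟩, hint, hne, hinvint⟩ := hfund.1
  rw [← hcast] at hx
  obtain ⟨T, U, hu, hv⟩ := int_coeff (2 * p) hirr hsf hD4 (by rw [← hx]; exact hint)
  have hεTU : ε = (T : ℝ) + (U : ℝ) * Real.sqrt (2 * (p:ℝ)) := by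
    rw [hx, hu, hv, hcast]; push_cast; ring
  have hsq : Real.sqrt (2 * (p:ℝ)) ^ 2 = 2 * (p:ℝ) := Real.sq_sqrt hd0
  set N : ℤ := T ^ 2 - 2 * p * U ^ 2 with hNdef
  have hNmul : ε * ((T : ℝ) - (U : ℝ) * Real.sqrt (2 * (p:ℝ))) = (N : ℝ) := by
    rw [hεTU, hNdef]
    push_cast
    nlinarith [hsq]
  have hN0 : N ≠ 0 := by
    intro h0
    rw [h0] at hNmul
    push_cast at hNmul
    have h1 : (T : ℝ) - (U : ℝ) * Real.sqrt (2 * (p:ℝ)) = 0 := by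
      rcases mul_eq_zero.mp hNmul with h | h
      · exact absurd h (ne_of_gt hε0)
      · exact h
    by_cases hU : U = 0
    · rw [hU] at h1
      push_cast at h1
      rw [hU] at hεTU
      push_cast at hεTU
      rw [hεTU] at hε
      simp at h1
      rw [h1] at hε
      norm_num at hε
    · refine hirr ⟨(T : ℚ) / (U : ℚ), ?_⟩
      have hUR : (U : ℝ) ≠ 0 := by exact_mod_cast hU
      push_cast
      rw [div_eq_iff hUR]
      nlinarith [h1]
  -- the inverse
  have hNR : ((N:ℤ) : ℝ) ≠ 0 := by exact_mod_cast hN0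
  have hinveq' : ε⁻¹ = ((T:ℝ) - (U:ℝ) * Real.sqrt (2 * (p:ℝ))) / (N : ℝ) := by
    rw [eq_div_iff hNR]
    rw [← hNmul]
    field_simp
  have hinveq : ε⁻¹ = (((T : ℚ) / (N : ℚ) : ℚ) : ℝ) + (((-U : ℚ) / (N : ℚ) : ℚ) : ℝ) * Real.sqrt ((2 * p : ℕ) : ℝ) := by
    rw [hinveq', hcast]
    push_cast
    ring
  obtain ⟨T', U', hT', hU'⟩ := int_coeff (2 * p) hirr hsf hD4 (by rw [← hinveq]; exact hinvint)
  have hTN : T = N * T' := by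
    have h1 : (T : ℚ) / (N : ℚ) = (T' : ℚ) := hT'
    have hNQ : (N : ℚ) ≠ 0 := by exact_mod_cast hN0
    rw [div_eq_iff hNQ] at h1
    exact_mod_cast h1.trans (mul_comm _ _)
  have hUN : -U = N * U' := by
    have h1 : ((-U : ℤ) : ℚ) / (N : ℚ) = (U' : ℚ) := by push_cast; push_cast at hU'; linarith [hU']
    have hNQ : (N : ℚ) ≠ 0 := by exact_mod_cast hN0
    rw [div_eq_iff hNQ] at h1
    exact_mod_cast h1.trans (mul_comm _ _)
  have hNunit : N * (T' ^ 2 - 2 * p * U' ^ 2) = 1 := by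
    have h2 : N = (N * T') ^ 2 - 2 * p * (N * U') ^ 2 := by
      rw [← hTN, ← hUN, hNdef]; ring
    have h3 : N * 1 = N * (N * (T' ^ 2 - 2 * p * U' ^ 2)) := by
      nlinarith [h2]
    have := mul_left_cancel₀ hN0 h3
    linarith [this]
  have hNone : N = 1 ∨ N = -1 := Int.isUnit_iff.mp (IsUnit.of_mul_eq_one _ hNunit)
  have hN1 : N = 1 := by
    rcases hNone with h | h
    · exact h
    · exfalso
      have hzm : ((T : ZMod p)) ^ 2 = -1 := by
        have := congrArg (fun z : ℤ => (z : ZMod p)) (hNdef ▸ h : T ^ 2 - 2 * (p:ℤ) * U ^ 2 = -1)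
        push_cast at this
        rw [ZMod.natCast_self] at this
        simpa using this
      have : IsSquare (-1 : ZMod p) := ⟨(T : ZMod p), by rw [← hzm]; ring⟩
      exact (ZMod.exists_sq_eq_neg_one_iff.mp this) hp4
  have hTUeq : T ^ 2 - 2 * (p:ℤ) * U ^ 2 = 1 := by rw [← hNdef]; exact hN1
  -- positivity of T and U
  have hinv2 : ε⁻¹ = (T:ℝ) - (U:ℝ) * Real.sqrt (2 * (p:ℝ)) := by
    rw [hinveq', hN1]; push_cast; ring
  have hinvpos : 0 < ε⁻¹ := inv_pos.mpr hε0
  have hinvlt : ε⁻¹ < 1 := by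
    rw [inv_lt_one_iff₀]; right; exact hε
  have hppos : (0:ℝ) < (p:ℝ) := by exact_mod_cast (by omega : 0 < p)
  have hsdpos : 0 < Real.sqrt (2 * (p:ℝ)) := Real.sqrt_pos.mpr (by linarith)
  have hT1 : 1 ≤ T := by
    have h2T : (1:ℝ) < 2 * (T:ℝ) := by
      have : ε + ε⁻¹ = 2 * (T:ℝ) := by rw [hinv2]; rw [hεTU]; ring
      linarith [this]
    have : (1:ℤ) < 2 * T := by exact_mod_cast h2T
    omega
  have hU1 : 1 ≤ U := by
    have h2U : (0:ℝ) < 2 * (U:ℝ) * Real.sqrt (2 * (p:ℝ)) := by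
      have : ε - ε⁻¹ = 2 * (U:ℝ) * Real.sqrt (2 * (p:ℝ)) := by rw [hinv2]; rw [hεTU]; ring
      linarith [this]
    have hUpos : (0:ℝ) < (U:ℝ) := by
      by_contra hc
      push_neg at hc
      nlinarith [hsdpos]
    have : (0:ℤ) < U := by exact_mod_cast hUpos
    omega
  exact ⟨T, U, hT1, hU1, hTUeq, hεTU⟩

lemma descent (p : ℕ) [hp : Fact p.Prime] (hp4 : p % 4 = 3) (hsf : Squarefree (2 * p))
    (T U : ℤ) (hT1 : 1 ≤ T) (hU1 : 1 ≤ U) (hTUeq : T ^ 2 - 2 * (p:ℤ) * U ^ 2 = 1) :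
    ∃ s u0 x y c₁ c₂ : ℕ, T.toNat = 2 * s + 1 ∧ U.toNat = 2 * u0 ∧ u0 = x * y ∧
      1 ≤ x ∧ 1 ≤ y ∧ x ^ 2 * c₁ = s ∧ y ^ 2 * c₂ = s + 1 ∧
      ((c₁ = 1 ∧ c₂ = 2 * p) ∨ (c₁ = 2 * p ∧ c₂ = 1) ∨ (c₁ = 2 ∧ c₂ = p) ∨ (c₁ = p ∧ c₂ = 2)) := by
  set t := T.toNat with htdef
  set w := U.toNat with hwdef
  have ht : (t : ℤ) = T := Int.toNat_of_nonneg (by omega)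
  have hw : (w : ℤ) = U := Int.toNat_of_nonneg (by omega)
  have ht1 : 1 ≤ t := by omega
  have hw1 : 1 ≤ w := by omega
  have hNat : t ^ 2 = 1 + 2 * (p * w ^ 2) := by
    have : (t : ℤ) ^ 2 = 1 + 2 * ((p:ℤ) * (w:ℤ) ^ 2) := by rw [ht, hw]; linarith [hTUeq]
    exact_mod_cast this
  -- t is odd
  have htodd : t % 2 = 1 := by
    rcases Nat.even_or_odd t with he | ho
    · exfalso
      have h1 : Even (t ^ 2) := (Nat.even_pow (n := 2)).mpr ⟨he, by norm_num⟩
      rw [Nat.even_iff, hNat] at h1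
      omega
    · exact Nat.odd_iff.mp ho
  obtain ⟨s, hs⟩ : ∃ s, t = 2 * s + 1 := ⟨t / 2, by omega⟩
  have hsw : p * w ^ 2 = 2 * (s * (s + 1)) := by
    rw [hs] at hNat
    nlinarith [hNat]
  have hweven : w % 2 = 0 := by
    have h1 : Even (p * w ^ 2) := ⟨s * (s + 1), by omega⟩
    rcases Nat.even_mul.mp h1 with h | h
    · exfalso; rw [Nat.even_iff] at h; omega
    · rw [← Nat.even_iff]; exact (Nat.even_pow.mp h).1
  obtain ⟨u0, hu0⟩ : ∃ u0, w = 2 * u0 := ⟨w / 2, by omega⟩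
  have hmain : s * (s + 1) = 2 * p * u0 ^ 2 := by
    rw [hu0] at hsw
    nlinarith [hsw]
  have hu01 : 1 ≤ u0 := by omega
  have hs1 : 1 ≤ s := by
    rcases Nat.eq_zero_or_pos s with h | h
    · exfalso
      rw [h] at hmain
      simp at hmain
      rcases hmain with h | h | h <;> omega
    · exact h
  obtain ⟨c₁, x, hx, hc₁⟩ := Nat.sq_mul_squarefree s
  obtain ⟨c₂, y, hy, hc₂⟩ := Nat.sq_mul_squarefree (s + 1)
  have hx1 : 1 ≤ x := by
    rcases Nat.eq_zero_or_pos x with h | h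
    · exfalso; rw [h] at hx; simp at hx; omega
    · exact h
  have hy1 : 1 ≤ y := by
    rcases Nat.eq_zero_or_pos y with h | h
    · exfalso; rw [h] at hy; simp at hy
    · exact h
  have hcc : (c₁ * c₂) * (x * y) ^ 2 = (2 * p) * u0 ^ 2 := by
    calc (c₁ * c₂) * (x * y) ^ 2 = (x ^ 2 * c₁) * (y ^ 2 * c₂) := by ring
    _ = s * (s + 1) := by rw [hx, hy]
    _ = 2 * p * u0 ^ 2 := hmain
  have hcop : Nat.Coprime c₁ c₂ := by
    have h1 : c₁ ∣ s := ⟨x ^ 2, by rw [← hx]; ring⟩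
    have h2 : c₂ ∣ s + 1 := ⟨y ^ 2, by rw [← hy]; ring⟩
    exact Nat.Coprime.coprime_dvd_left h1
      (Nat.Coprime.coprime_dvd_right h2 (by
        unfold Nat.Coprime
        rw [Nat.gcd_self_add_right]
        exact Nat.gcd_one_right s))
  have hsfcc : Squarefree (c₁ * c₂) := (Nat.squarefree_mul hcop).mpr ⟨hc₁, hc₂⟩
  have hcceq : c₁ * c₂ = 2 * p :=
    sf_part_eq hsfcc hsf (by positivity) (by positivity) hcc
  have hxyu : x * y = u0 := by
    have h1 : (2 * p) * (x * y) ^ 2 = (2 * p) * u0 ^ 2 := by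
      calc (2 * p) * (x * y) ^ 2 = (c₁ * c₂) * (x * y) ^ 2 := by rw [hcceq]
      _ = (2 * p) * u0 ^ 2 := hcc
    have h2 : (x * y) ^ 2 = u0 ^ 2 := Nat.eq_of_mul_eq_mul_left (by omega) h1
    exact Nat.pow_left_injective (by norm_num) h2
  -- case analysis on the distribution of 2 and p
  have hc₁d : c₁ ∣ 2 * p := ⟨c₂, hcceq.symm⟩
  have hc₂d : c₂ ∣ 2 * p := ⟨c₁, by rw [← hcceq]; ring⟩
  have hpd : p ∣ c₁ ∨ p ∣ c₂ := (Nat.Prime.dvd_mul hp.out).mp ⟨2, by rw [hcceq]; ring⟩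
  have h2d : 2 ∣ c₁ ∨ 2 ∣ c₂ := (Nat.Prime.dvd_mul Nat.prime_two).mp ⟨p, by rw [hcceq]⟩
  have hcop2p : Nat.Coprime 2 p := (Nat.coprime_primes Nat.prime_two hp.out).mpr (by omega)
  have hnotboth : ¬ (p ∣ c₁ ∧ p ∣ c₂) := by
    rintro ⟨h1, h2⟩
    have := Nat.dvd_gcd h1 h2
    rw [hcop] at this
    have := Nat.le_of_dvd one_pos this
    omega
  have hcases : (c₁ = 1 ∧ c₂ = 2 * p) ∨ (c₁ = 2 * p ∧ c₂ = 1) ∨ (c₁ = 2 ∧ c₂ = p) ∨ (c₁ = p ∧ c₂ = 2) := by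
    rcases hpd with hpc | hpc <;> rcases h2d with h2c | h2c
    · -- p ∣ c₁, 2 ∣ c₁ : c₁ = 2p
      have h2p : 2 * p ∣ c₁ := Nat.Coprime.mul_dvd_of_dvd_of_dvd hcop2p h2c hpc
      have hc1 : c₁ = 2 * p := Nat.dvd_antisymm hc₁d h2p
      have hc2 : c₂ = 1 := by
        have h9 : (2 * p) * c₂ = (2 * p) * 1 := by
          calc (2 * p) * c₂ = c₁ * c₂ := by rw [hc1]
          _ = 2 * p := hcceq
          _ = (2 * p) * 1 := by ring
        exact Nat.eq_of_mul_eq_mul_left (by omega) h9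
      exact Or.inr (Or.inl ⟨hc1, hc2⟩)
    · -- p ∣ c₁, 2 ∣ c₂ : c₂ = 2, c₁ = p
      obtain ⟨k, hk⟩ := h2c
      have hkp : k ∣ p := (Nat.mul_dvd_mul_iff_left (by norm_num : 0 < 2)).mp (by rw [← hk]; exact hc₂d)
      have hk1 : k = 1 := by
        rcases hp.out.eq_one_or_self_of_dvd k hkp with h | h
        · exact h
        · exfalso
          exact hnotboth ⟨hpc, by rw [hk, h]; exact ⟨2, by ring⟩⟩
      have hc2 : c₂ = 2 := by rw [hk, hk1, mul_one]
      have hc1 : c₁ = p := by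
        have h9 : c₁ * 2 = p * 2 := by
          calc c₁ * 2 = c₁ * c₂ := by rw [hc2]
          _ = 2 * p := hcceq
          _ = p * 2 := by ring
        exact Nat.eq_of_mul_eq_mul_right (by norm_num) h9
      exact Or.inr (Or.inr (Or.inr ⟨hc1, hc2⟩))
    · -- p ∣ c₂, 2 ∣ c₁ : c₁ = 2, c₂ = p
      obtain ⟨k, hk⟩ := h2c
      have hkp : k ∣ p := (Nat.mul_dvd_mul_iff_left (by norm_num : 0 < 2)).mp (by rw [← hk]; exact hc₁d)
      have hk1 : k = 1 := by
        rcases hp.out.eq_one_or_self_of_dvd k hkp with h | h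
        · exact h
        · exfalso
          exact hnotboth ⟨by rw [hk, h]; exact ⟨2, by ring⟩, hpc⟩
      have hc1 : c₁ = 2 := by rw [hk, hk1, mul_one]
      have hc2 : c₂ = p := by
        have : 2 * c₂ = 2 * p := by rw [← hcceq, hc1]
        exact Nat.eq_of_mul_eq_mul_left (by norm_num) this
      exact Or.inr (Or.inr (Or.inl ⟨hc1, hc2⟩))
    · -- p ∣ c₂, 2 ∣ c₂ : c₂ = 2p
      have h2p : 2 * p ∣ c₂ := Nat.Coprime.mul_dvd_of_dvd_of_dvd hcop2p h2c hpc
      have hc2 : c₂ = 2 * p := Nat.dvd_antisymm hc₂d h2p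
      have hc1 : c₁ = 1 := by
        have h9 : c₁ * (2 * p) = 1 * (2 * p) := by
          calc c₁ * (2 * p) = c₁ * c₂ := by rw [← hc2]
          _ = 2 * p := hcceq
          _ = 1 * (2 * p) := by ring
        exact Nat.eq_of_mul_eq_mul_right (by omega) h9
      exact Or.inl ⟨hc1, hc2⟩
  exact ⟨s, u0, x, y, c₁, c₂, hs, hu0, hxyu.symm, hx1, hy1, hx, hy, hcases⟩

set_option maxHeartbeats 1000000 in
/-- **Lemma 6 (ii).** Let `p` be a prime `≡ 3 (mod 4)` and `ε > 1` the fundamental unit of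
`ℚ(√(2p))`. Then `√ε = a√2 + b√p` for some integers `a, b`, i.e.
`ε = 2a² + b²p + 2ab√(2p)`, and `2a² − b²p = (2/p)`. -/
theorem stmt_8 (p : ℕ) [hp : Fact p.Prime] (hp4 : p % 4 = 3)
    (ε : ℝ) (hε : 1 < ε) (hfund : isFundUnit (2 * (p : ℝ)) ε) :
    ∃ a b : ℤ,
      ε = 2 * (a : ℝ) ^ 2 + (b : ℝ) ^ 2 * p + 2 * a * b * Real.sqrt (2 * (p : ℝ)) ∧
      2 * a ^ 2 - b ^ 2 * (p : ℤ) = legendreSym p 2 := by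
  have hnsq : ¬ IsSquare (2 * p) := by
    rintro ⟨k, hk⟩
    rcases Nat.even_or_odd k with ⟨j, hj⟩ | ho
    · subst hj
      have : 2 * p = 4 * (j * j) := by rw [hk]; ring
      omega
    · have : Odd (k * k) := ho.mul ho
      rw [Nat.odd_iff] at this
      omega
  have hirr : Irrational (Real.sqrt ((2 * p : ℕ) : ℝ)) := irrational_sqrt_natCast_iff.mpr hnsq
  have hsf : Squarefree (2 * p) := by
    refine (Nat.squarefree_mul ?_).mpr ⟨Nat.prime_two.squarefree, hp.out.squarefree⟩
    exact (Nat.coprime_primes Nat.prime_two hp.out).mpr (by omega)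
  have hD4 : (2 * p) % 4 = 2 := by omega
  have hsq : Real.sqrt (2 * (p:ℝ)) ^ 2 = 2 * (p:ℝ) := Real.sq_sqrt (by positivity)
  obtain ⟨T, U, hT1, hU1, hTUeq, hεTU⟩ := exists_TU p hp4 ε hε hfund hirr hsf hD4
  obtain ⟨s, u0, x, y, c₁, c₂, hs, hu0, hxyu, hx1, hy1, hx, hy, hcases⟩ :=
    descent p hp4 hsf T U hT1 hU1 hTUeq
  have ht : ((T.toNat : ℕ) : ℤ) = T := Int.toNat_of_nonneg (by omega)
  have hw : ((U.toNat : ℕ) : ℤ) = U := Int.toNat_of_nonneg (by omega)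
  set d : ℝ := Real.sqrt (2 * (p:ℝ)) with hddef
  rcases hcases with ⟨h1, h2⟩ | ⟨h1, h2⟩ | ⟨h1, h2⟩ | ⟨h1, h2⟩
  · -- c₁ = 1, c₂ = 2p : ε = (x + y√(2p))², contradiction
    exfalso
    rw [h1] at hx; rw [h2] at hy
    have e1 : ((x:ℝ))^2 + (y:ℝ)^2 * (2*(p:ℝ)) = (T:ℝ) := by
      have : (x^2 + y^2 * (2*p) : ℕ) = T.toNat := by
        rw [hs]
        linarith [hx, hy]
      calc ((x:ℝ))^2 + (y:ℝ)^2 * (2*(p:ℝ)) = ((x^2 + y^2 * (2*p) : ℕ) : ℝ) := by push_cast; ring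
      _ = ((T.toNat : ℕ) : ℝ) := by rw [this]
      _ = (T : ℝ) := by exact_mod_cast congrArg (Int.cast : ℤ → ℝ) ht
    have e2 : 2*(x:ℝ)*(y:ℝ) = (U:ℝ) := by
      have : (2 * (x * y) : ℕ) = U.toNat := by rw [hu0, hxyu]
      calc 2*(x:ℝ)*(y:ℝ) = ((2 * (x*y) : ℕ) : ℝ) := by push_cast; ring
      _ = ((U.toNat : ℕ) : ℝ) := by rw [this]
      _ = (U : ℝ) := by exact_mod_cast congrArg (Int.cast : ℤ → ℝ) hw
    refine no_sqrt_unit p ε hε hfund x y ?_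
    rw [← hddef]
    calc ((x:ℝ) + (y:ℝ) * d)^2 = (x:ℝ)^2 + (y:ℝ)^2 * (2*(p:ℝ)) + 2*(x:ℝ)*(y:ℝ) * d := by
          rw [hddef]; linear_combination ((y:ℝ))^2 * hsq
    _ = (T:ℝ) + (U:ℝ) * d := by rw [e1, e2]
    _ = ε := by rw [hεTU]
  · -- c₁ = 2p, c₂ = 1 : ε = (y + x√(2p))², contradiction
    exfalso
    rw [h1] at hx; rw [h2] at hy
    have e1 : ((y:ℝ))^2 + (x:ℝ)^2 * (2*(p:ℝ)) = (T:ℝ) := by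
      have : (y^2 + x^2 * (2*p) : ℕ) = T.toNat := by
        rw [hs]
        linarith [hx, hy]
      calc ((y:ℝ))^2 + (x:ℝ)^2 * (2*(p:ℝ)) = ((y^2 + x^2 * (2*p) : ℕ) : ℝ) := by push_cast; ring
      _ = ((T.toNat : ℕ) : ℝ) := by rw [this]
      _ = (T : ℝ) := by exact_mod_cast congrArg (Int.cast : ℤ → ℝ) ht
    have e2 : 2*(y:ℝ)*(x:ℝ) = (U:ℝ) := by
      have : (2 * (x * y) : ℕ) = U.toNat := by rw [hu0, hxyu]
      calc 2*(y:ℝ)*(x:ℝ) = ((2 * (x*y) : ℕ) : ℝ) := by push_cast; ring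
      _ = ((U.toNat : ℕ) : ℝ) := by rw [this]
      _ = (U : ℝ) := by exact_mod_cast congrArg (Int.cast : ℤ → ℝ) hw
    refine no_sqrt_unit p ε hε hfund y x ?_
    rw [← hddef]
    calc ((y:ℝ) + (x:ℝ) * d)^2 = (y:ℝ)^2 + (x:ℝ)^2 * (2*(p:ℝ)) + 2*(y:ℝ)*(x:ℝ) * d := by
          rw [hddef]; linear_combination ((x:ℝ))^2 * hsq
    _ = (T:ℝ) + (U:ℝ) * d := by rw [e1, e2]
    _ = ε := by rw [hεTU]
  · -- c₁ = 2, c₂ = p : a = x, b = y, sign -1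
    rw [h1] at hx; rw [h2] at hy
    refine ⟨(x:ℤ), (y:ℤ), ?_, ?_⟩
    · have e1 : 2*((x:ℝ))^2 + (y:ℝ)^2 * (p:ℝ) = (T:ℝ) := by
        have : (2 * x^2 + y^2 * p : ℕ) = T.toNat := by
          rw [hs]
          linarith [hx, hy]
        calc 2*((x:ℝ))^2 + (y:ℝ)^2 * (p:ℝ) = ((2 * x^2 + y^2 * p : ℕ) : ℝ) := by push_cast; ring
        _ = ((T.toNat : ℕ) : ℝ) := by rw [this]
        _ = (T : ℝ) := by exact_mod_cast congrArg (Int.cast : ℤ → ℝ) ht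
      have e2 : 2*(x:ℝ)*(y:ℝ) = (U:ℝ) := by
        have : (2 * (x * y) : ℕ) = U.toNat := by rw [hu0, hxyu]
        calc 2*(x:ℝ)*(y:ℝ) = ((2 * (x*y) : ℕ) : ℝ) := by push_cast; ring
        _ = ((U.toNat : ℕ) : ℝ) := by rw [this]
        _ = (U : ℝ) := by exact_mod_cast congrArg (Int.cast : ℤ → ℝ) hw
      rw [hεTU, ← e1, ← e2]
      push_cast
      ring
    · have hl : legendreSym p 2 = -1 := legendre_neg p hp4 x y (by linarith [hx, hy])
      rw [hl]
      have : ((y:ℤ))^2 * p = 2 * ((x:ℤ))^2 + 1 := by exact_mod_cast (by linarith [hx, hy] : y^2 * p = 2 * x^2 + 1)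
      push_cast
      linarith [this]
  · -- c₁ = p, c₂ = 2 : a = y, b = x, sign +1
    rw [h1] at hx; rw [h2] at hy
    refine ⟨(y:ℤ), (x:ℤ), ?_, ?_⟩
    · have e1 : 2*((y:ℝ))^2 + (x:ℝ)^2 * (p:ℝ) = (T:ℝ) := by
        have : (2 * y^2 + x^2 * p : ℕ) = T.toNat := by
          rw [hs]
          linarith [hx, hy]
        calc 2*((y:ℝ))^2 + (x:ℝ)^2 * (p:ℝ) = ((2 * y^2 + x^2 * p : ℕ) : ℝ) := by push_cast; ring
        _ = ((T.toNat : ℕ) : ℝ) := by rw [this]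
        _ = (T : ℝ) := by exact_mod_cast congrArg (Int.cast : ℤ → ℝ) ht
      have e2 : 2*(y:ℝ)*(x:ℝ) = (U:ℝ) := by
        have : (2 * (x * y) : ℕ) = U.toNat := by rw [hu0, hxyu]
        calc 2*(y:ℝ)*(x:ℝ) = ((2 * (x*y) : ℕ) : ℝ) := by push_cast; ring
        _ = ((U.toNat : ℕ) : ℝ) := by rw [this]
        _ = (U : ℝ) := by exact_mod_cast congrArg (Int.cast : ℤ → ℝ) hw
      rw [hεTU, ← e1, ← e2]
      push_cast
      ring
    · have hl : legendreSym p 2 = 1 := legendre_pos p hp4 x y (by linarith [hx, hy])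
      rw [hl]
      have : ((y:ℤ))^2 * 2 = ((x:ℤ))^2 * p + 1 := by exact_mod_cast (by linarith [hx, hy] : y^2 * 2 = x^2 * p + 1)
      push_cast
      linarith [this]
end

section
/- Let p be a prime with p ≡ 3 (mod 4), and let ε > 1 be the fundamental unit of the real quadratic field ℚ(√p) ⊆ ℝ. Then there exist odd integers a, b such that 2ε = a²p + b² + 2ab√p (equivalently, √ε = (a√(2p) + b√2)/2), and moreover (a²p − b²)/2 = 1 if p ≡ 3 (mod 8) and (a²p − b²)/2 = −1 if p ≡ 7 (mod 8). -/
open Polynomial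

lemma sqrt_nat_integral (p : ℕ) : IsIntegral ℤ (Real.sqrt p) := by
  refine ⟨X ^ 2 - C (p : ℤ), monic_X_pow_sub_C _ (by norm_num), ?_⟩
  have : Real.sqrt p ^ 2 = (p : ℝ) := Real.sq_sqrt (by positivity)
  simp [eval₂_sub, eval₂_pow, this]

lemma int_cast_integral (b : ℤ) : IsIntegral ℤ ((b : ℝ)) := by
  have := isIntegral_algebraMap (R := ℤ) (A := ℝ) (x := b)
  simpa using this

lemma sq4 (x : ℤ) : (x % 2 = 0 ∧ x ^ 2 % 4 = 0) ∨ (x % 2 = 1 ∧ x ^ 2 % 4 = 1) := by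
  have h := Int.emod_two_eq x
  have hx : x = 2 * (x / 2) + x % 2 := (Int.mul_ediv_add_emod x 2).symm
  set k := x / 2 with hk
  rcases h with h | h
  · exact Or.inl ⟨h, by have : x ^ 2 = 4 * k ^ 2 := by rw [show x = 2 * k by omega]; ring
                        omega⟩
  · exact Or.inr ⟨h, by have : x ^ 2 = 4 * (k ^ 2 + k) + 1 := by
                          rw [show x = 2 * k + 1 by omega]; ring
                        omega⟩

lemma evens_of_eq (p s m N : ℤ) (hp : p % 4 = 3) (h : s ^ 2 - p * m ^ 2 = 4 * N) :
    s % 2 = 0 ∧ m % 2 = 0 := by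
  obtain ⟨l, hl⟩ : ∃ l, p = 4 * l + 3 := ⟨p / 4, by omega⟩
  have key : s ^ 2 - 3 * m ^ 2 = 4 * (N + l * m ^ 2) := by
    rw [hl] at h; ring_nf; ring_nf at h; linarith
  have h1 := sq4 s
  have h2 := sq4 m
  set A := s ^ 2
  set B := m ^ 2
  omega

lemma norm_neg_one_impossible (p t u : ℤ) (hp4 : p % 4 = 3) (h : t ^ 2 - p * u ^ 2 = -1) :
    False := by
  obtain ⟨l, hl⟩ : ∃ l, p = 4 * l + 3 := ⟨p / 4, by omega⟩
  have key : t ^ 2 - 3 * u ^ 2 - 4 * (l * u ^ 2) = -1 := by rw [hl] at h; linarith [h]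
  have h1 := sq4 t
  have h2 := sq4 u
  set A := t ^ 2
  set B := u ^ 2
  omega

lemma not_sq_of_mod4 (p : ℕ) (hp4 : p % 4 = 3) (d : ℕ) : p ≠ d ^ 2 := by
  intro h
  have h2 : d ^ 2 % 4 = (d % 4) ^ 2 % 4 := by conv_lhs => rw [Nat.pow_mod]
  have : d % 4 < 4 := Nat.mod_lt _ (by norm_num)
  interval_cases h4 : d % 4 <;> omega

lemma rat_int_of_p_mul_sq (p : ℕ) (hp : p.Prime) (hp4 : p % 4 = 3) (z : ℚ) (k : ℤ)
    (h : (p : ℚ) * z ^ 2 = (k : ℚ)) : ∃ m : ℤ, (m : ℚ) = z := by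
  have hz : (z.num : ℚ) / (z.den : ℚ) = z := Rat.num_div_den z
  have hden : (z.den : ℚ) ≠ 0 := by exact_mod_cast z.den_ne_zero
  have hint : (p : ℤ) * z.num ^ 2 = k * (z.den : ℤ) ^ 2 := by
    have : (p : ℚ) * ((z.num : ℚ) / (z.den : ℚ)) ^ 2 = (k : ℚ) := by rw [hz]; exact h
    field_simp at this
    rw [mul_comm k]; exact_mod_cast this
  have hdvd : (z.den : ℤ) ^ 2 ∣ (p : ℤ) * z.num ^ 2 := ⟨k, by linarith⟩
  have hdvdN : z.den ^ 2 ∣ p * z.num.natAbs ^ 2 := by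
    have := Int.natAbs_dvd_natAbs.mpr hdvd
    simpa [Int.natAbs_mul, Int.natAbs_pow] using this
  have hcop : Nat.Coprime (z.den ^ 2) (z.num.natAbs ^ 2) := Nat.Coprime.pow 2 2 z.reduced.symm
  have hdvdp : z.den ^ 2 ∣ p := Nat.Coprime.dvd_of_dvd_mul_right hcop hdvdN
  rcases (Nat.dvd_prime hp).mp hdvdp with h1 | h1
  · have : z.den = 1 := by nlinarith [z.pos]
    exact ⟨z.num, (Rat.den_eq_one_iff z).mp this⟩
  · exact absurd h1.symm (not_sq_of_mod4 p hp4 z.den)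

/-- integral elements of ℚ(√p) have integer coordinates, for p ≡ 3 mod 4 prime -/
lemma coords_int (p : ℕ) (hp : p.Prime) (hp4 : p % 4 = 3) (q r : ℚ)
    (h : IsIntegral ℤ ((q : ℝ) + (r : ℝ) * Real.sqrt p)) :
    ∃ t u : ℤ, (t : ℚ) = q ∧ (u : ℚ) = r := by
  set x : ℝ := (q : ℝ) + (r : ℝ) * Real.sqrt p with hxdef
  by_cases hr : r = 0
  · subst hr
    have hq : IsIntegral ℤ ((q : ℝ)) := by simpa [hxdef] using h
    have : IsIntegral ℤ q := by
      rwa [show ((q : ℝ)) = algebraMap ℚ ℝ q from rfl,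
        isIntegral_algebraMap_iff (algebraMap ℚ ℝ).injective] at hq
    obtain ⟨t, ht⟩ := IsIntegrallyClosed.isIntegral_iff.mp this
    exact ⟨t, 0, ht, by simp⟩
  · have hirr : Irrational x := by
      have h1 : Irrational ((r : ℝ) * Real.sqrt p) := (Irrational.ratCast_mul hp.irrational_sqrt hr)
      exact Irrational.ratCast_add (q := q) h1
    have hsq : Real.sqrt p ^ 2 = (p : ℝ) := Real.sq_sqrt (by positivity)
    set f : ℚ[X] := X ^ 2 - C (2 * q) * X + C (q ^ 2 - p * r ^ 2) with hfdef
    have hf0 : aeval x f = 0 := by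
      simp only [hfdef, map_add, map_sub, map_mul, map_pow, aeval_X, aeval_C, eq_ratCast]
      push_cast
      rw [hxdef]
      linear_combination (r : ℝ) ^ 2 * hsq
    have hfm : f.Monic := by
      have : f = X ^ 2 + (-(C (2 * q)) * X + C (q ^ 2 - p * r ^ 2)) := by ring
      rw [this]
      apply monic_X_pow_add
      apply lt_of_le_of_lt (degree_add_le _ _)
      have d1 : degree (-(C (2 * q)) * X) ≤ 1 := by
        calc degree (-(C (2 * q)) * X) ≤ degree (-(C (2*q))) + degree (X : ℚ[X]) :=
              degree_mul_le _ _
        _ ≤ 0 + 1 := by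
              apply add_le_add
              · rw [degree_neg]; exact degree_C_le
              · exact le_of_eq (degree_X)
        _ = 1 := by norm_num
      have d2 : degree (C (q ^ 2 - (p:ℚ) * r ^ 2)) ≤ 0 := degree_C_le
      have : max (degree (-(C (2 * q)) * X)) (degree (C (q ^ 2 - (p:ℚ) * r ^ 2))) ≤ 1 :=
        max_le d1 (le_trans d2 (by norm_num))
      exact lt_of_le_of_lt this (by norm_num)
    have hfne : f ≠ 0 := hfm.ne_zero
    have hndeg : f.natDegree = 2 := by
      have : f = X ^ 2 + (-(C (2 * q)) * X + C (q ^ 2 - p * r ^ 2)) := by ring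
      rw [this]
      compute_degree!
    have hint : IsIntegral ℚ x := h.tower_top
    have hdvd := minpoly.dvd ℚ x hf0
    have h2 : 2 ≤ (minpoly ℚ x).natDegree := by
      rw [minpoly.two_le_natDegree_iff hint]
      rintro ⟨y, hy⟩
      exact hirr ⟨y, hy⟩
    have hle : (minpoly ℚ x).natDegree ≤ 2 :=
      le_trans (natDegree_le_of_dvd hdvd hfne) (le_of_eq hndeg)
    have heq : minpoly ℚ x = f := by
      obtain ⟨c, hc⟩ := hdvd
      have hmx := minpoly.monic hint
      have hcne : c ≠ 0 := by rintro rfl; simp [hc] at hfne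
      have hdegs : f.natDegree = (minpoly ℚ x).natDegree + c.natDegree := by
        rw [hc, natDegree_mul hmx.ne_zero hcne]
      have hc0 : c.natDegree = 0 := by omega
      obtain ⟨a, rfl⟩ : ∃ a : ℚ, c = C a := ⟨c.coeff 0, eq_C_of_natDegree_eq_zero hc0⟩
      have : a = 1 := by
        have hfm' := hfm
        rw [hc] at hfm'
        have hl : (minpoly ℚ x * C a).leadingCoeff = 1 := hfm'
        rw [leadingCoeff_mul, hmx.leadingCoeff, one_mul] at hl
        simpa using hl
      rw [hc, this]
      simp
    have hmap : minpoly ℚ x = (minpoly ℤ x).map (algebraMap ℤ ℚ) :=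
      minpoly.isIntegrallyClosed_eq_field_fractions' ℚ h
    have hcoeffs : f.coeff 1 = -(2 * q) ∧ f.coeff 0 = q ^ 2 - p * r ^ 2 := by
      rw [hfdef]
      generalize (2 * q) = A
      generalize (q ^ 2 - (p : ℚ) * r ^ 2) = B
      constructor <;>
        simp [coeff_add, coeff_sub, coeff_C_mul, coeff_X_pow, coeff_C]
    obtain ⟨hcoeff1, hcoeff0⟩ := hcoeffs
    have hs : ∃ s : ℤ, (s : ℚ) = 2 * q := by
      refine ⟨-((minpoly ℤ x).coeff 1), ?_⟩
      have : f.coeff 1 = ((minpoly ℤ x).coeff 1 : ℚ) := by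
        rw [← heq, hmap, coeff_map]; rfl
      push_cast
      rw [← this, hcoeff1]; ring
    have hN : ∃ N : ℤ, (N : ℚ) = q ^ 2 - p * r ^ 2 := by
      refine ⟨(minpoly ℤ x).coeff 0, ?_⟩
      have : f.coeff 0 = ((minpoly ℤ x).coeff 0 : ℚ) := by
        rw [← heq, hmap, coeff_map]; rfl
      rw [← this, hcoeff0]
    obtain ⟨s, hs⟩ := hs
    obtain ⟨N, hN⟩ := hN
    have hw : (p : ℚ) * (2 * r) ^ 2 = ((s ^ 2 - 4 * N : ℤ) : ℚ) := by
      push_cast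
      rw [hs]
      nlinarith [hN]
    obtain ⟨m, hm⟩ := rat_int_of_p_mul_sq p hp hp4 (2 * r) _ hw
    have hrel : s ^ 2 - (p : ℤ) * m ^ 2 = 4 * N := by
      have : (s : ℚ) ^ 2 - (p : ℚ) * (m : ℚ) ^ 2 = 4 * (N : ℚ) := by
        rw [hm, hs]; nlinarith [hN]
      exact_mod_cast this
    obtain ⟨he1, he2⟩ := evens_of_eq p s m N (by omega) hrel
    refine ⟨s / 2, m / 2, ?_, ?_⟩
    · have : (2 : ℚ) * ((s / 2 : ℤ) : ℚ) = 2 * q := by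
        rw [← hs]; norm_cast; omega
      linarith
    · have : (2 : ℚ) * ((m / 2 : ℤ) : ℚ) = 2 * r := by
        rw [← hm]; norm_cast; omega
      linarith

lemma coprime_sq_split (k w v : ℤ) (hcop : IsCoprime k w) (h : k * w = v ^ 2)
    (hk : 0 < k) (hw : 0 < w) : ∃ a b : ℤ, k = a ^ 2 ∧ w = b ^ 2 ∧ v = a * b := by
  obtain ⟨a0, ha⟩ := Int.sq_of_isCoprime hcop h
  obtain ⟨b0, hb⟩ := Int.sq_of_isCoprime hcop.symm (by rw [mul_comm]; exact h)
  have ha' : k = a0 ^ 2 := by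
    rcases ha with h' | h'
    · exact h'
    · nlinarith
  have hb' : w = b0 ^ 2 := by
    rcases hb with h' | h'
    · exact h'
    · nlinarith
  have hv : (v - a0 * b0) * (v + a0 * b0) = 0 := by
    linear_combination -h + w * ha' + a0 ^ 2 * hb'
  rcases mul_eq_zero.mp hv with h' | h'
  · exact ⟨a0, b0, ha', hb', by linarith⟩
  · exact ⟨-a0, b0, by rw [ha']; ring, hb', by linarith⟩

lemma no_sqrt_fund (d ε η : ℝ) (hε : 1 < ε) (hfund : isFundUnit d ε)
    (hunit : isQuadUnit d η) (hsq : η ^ 2 = ε) : False := by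
  obtain ⟨n, hn⟩ := hfund.2 η hunit
  have hsq' : (ε ^ n) ^ 2 = ε := by
    rcases hn with hn | hn
    · rw [← hn]; exact hsq
    · have : ε ^ n = -η := by rw [hn]; ring
      rw [this]; rw [← hsq]; ring
  have h1 : ε ^ (n * 2) = ε ^ (1 : ℤ) := by
    rw [zpow_mul, zpow_one]
    rw [show (2 : ℤ) = (2 : ℕ) from rfl, zpow_natCast]
    exact hsq'
  have hinj := zpow_right_injective₀ (by linarith : (0:ℝ) < ε) (by linarith : ε ≠ 1) h1
  omega

lemma quad_unit_mk (p : ℕ) (hpp : 0 < p) (a b c : ℤ) (hc : c = 1 ∨ c = -1)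
    (hnorm : b ^ 2 - (p : ℤ) * a ^ 2 = c) :
    isQuadUnit (p : ℝ) ((b : ℝ) + (a : ℝ) * Real.sqrt p) := by
  have hsq : Real.sqrt p ^ 2 = (p : ℝ) := Real.sq_sqrt (by positivity)
  set η : ℝ := (b : ℝ) + (a : ℝ) * Real.sqrt p with hη
  have hconj : η * ((b : ℝ) - (a : ℝ) * Real.sqrt p) = (c : ℝ) := by
    have : ((b ^ 2 - (p : ℤ) * a ^ 2 : ℤ) : ℝ) = (c : ℝ) := by exact_mod_cast hnorm
    rw [hη]
    push_cast at this ⊢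
    linear_combination this - (a : ℝ) ^ 2 * hsq
  have hne : η ≠ 0 := by
    intro h0
    rw [h0, zero_mul] at hconj
    rcases hc with rfl | rfl <;> norm_num at hconj
  refine ⟨⟨(b : ℚ), (a : ℚ), by push_cast; ring⟩, ?_, hne, ?_⟩
  · exact (int_cast_integral b).add ((int_cast_integral a).mul (sqrt_nat_integral p))
  · have hinv : η⁻¹ = ((c * b : ℤ) : ℝ) + ((-(c * a) : ℤ) : ℝ) * Real.sqrt p := by
      apply inv_eq_of_mul_eq_one_right
      have hcc : (c : ℝ) * (c : ℝ) = 1 := by rcases hc with rfl | rfl <;> norm_num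
      have : ((c * b : ℤ) : ℝ) + ((-(c * a) : ℤ) : ℝ) * Real.sqrt p
          = (c : ℝ) * ((b : ℝ) - (a : ℝ) * Real.sqrt p) := by push_cast; ring
      rw [this, ← mul_assoc, mul_comm η, mul_assoc, hconj]
      · exact hcc
    rw [hinv]
    exact (int_cast_integral _).add ((int_cast_integral _).mul (sqrt_nat_integral p))

lemma odd_sq_mod8 (a : ℤ) (ha : Odd a) : ∃ m : ℤ, a ^ 2 = 8 * m + 1 := by
  obtain ⟨k, rfl⟩ := ha
  obtain ⟨m, hm⟩ := Int.even_mul_succ_self k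
  exact ⟨m, by rw [show (2*k+1)^2 = 4*(k*(k+1)) + 1 by ring, hm]; ring⟩

lemma endgame (p : ℕ) (a b c : ℤ) (ha : Odd a) (hb : Odd b)
    (hc : a ^ 2 * (p : ℤ) - b ^ 2 = c) (hc2 : c = 2 ∨ c = -2) :
    (p % 8 = 3 → c = 2) ∧ (p % 8 = 7 → c = -2) := by
  obtain ⟨m, hm⟩ := odd_sq_mod8 a ha
  obtain ⟨n, hn⟩ := odd_sq_mod8 b hb
  have key : c = 8 * (m * (p : ℤ)) + (p : ℤ) - 8 * n - 1 := by
    rw [← hc, hm, hn]; ring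
  generalize m * (p : ℤ) = M at key
  constructor <;> intro h8 <;> omega

set_option maxHeartbeats 1600000 in
/-- **Lemma 6 (iii).** Let `p` be a prime `≡ 3 (mod 4)` and `ε > 1` the fundamental unit of
`ℚ(√p)`. Then `√ε = (a√(2p) + b√2)/2` for some odd integers `a, b`, i.e.
`2ε = a²p + b² + 2ab√p`, and `(a²p − b²)/2 = 1` if `p ≡ 3 (mod 8)` while
`(a²p − b²)/2 = −1` if `p ≡ 7 (mod 8)`. -/
theorem stmt_9 (p : ℕ) (hp : p.Prime) (hp4 : p % 4 = 3)
    (ε : ℝ) (hε : 1 < ε) (hfund : isFundUnit (p : ℝ) ε) :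
    ∃ a b : ℤ, Odd a ∧ Odd b ∧
      2 * ε = (a : ℝ) ^ 2 * p + (b : ℝ) ^ 2 + 2 * a * b * Real.sqrt (p : ℝ) ∧
      (p % 8 = 3 → a ^ 2 * (p : ℤ) - b ^ 2 = 2) ∧
      (p % 8 = 7 → a ^ 2 * (p : ℤ) - b ^ 2 = -2) := by
  obtain ⟨⟨⟨q, r, hqr⟩, hεint, hεne, hεinvint⟩, hall⟩ := hfund
  have hfund' : isFundUnit (p : ℝ) ε :=
    ⟨⟨⟨q, r, hqr⟩, hεint, hεne, hεinvint⟩, hall⟩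
  have hppos : 0 < p := hp.pos
  have hsq : Real.sqrt p ^ 2 = (p : ℝ) := Real.sq_sqrt (by positivity)
  have hsppos : 0 < Real.sqrt p := Real.sqrt_pos.mpr (by positivity)
  obtain ⟨t, u, hqt, hru⟩ := coords_int p hp hp4 q r (by rw [← hqr]; exact hεint)
  have hεeq : ε = (t : ℝ) + (u : ℝ) * Real.sqrt p := by
    rw [hqr, ← hqt, ← hru]; push_cast; ring
  set N : ℤ := t ^ 2 - p * u ^ 2 with hNdef
  have hconj : ε * ((t : ℝ) - (u : ℝ) * Real.sqrt p) = (N : ℝ) := by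
    rw [hεeq, hNdef]
    push_cast
    linear_combination -(u : ℝ) ^ 2 * hsq
  have hNne : N ≠ 0 := by
    intro h0
    rw [h0] at hconj
    have hεpos : (0:ℝ) < ε := by linarith
    have hc0 : ε * ((t : ℝ) - (u : ℝ) * Real.sqrt p) = 0 := by rw [hconj]; norm_num
    have h1 : (t : ℝ) - (u : ℝ) * Real.sqrt p = 0 := by
      rcases mul_eq_zero.mp hc0 with h | h
      · exact absurd h hεne
      · exact h
    by_cases hu0 : u = 0
    · rw [hu0] at h1
      simp at h1
      rw [hεeq, hu0, h1] at hε
      norm_num at hε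
    · have : Real.sqrt p = ((t : ℚ) / (u : ℚ) : ℚ) := by
        have hur : (u : ℝ) ≠ 0 := by exact_mod_cast hu0
        push_cast
        field_simp
        linarith [h1]
      exact hp.irrational_sqrt ⟨_, this.symm⟩
  have hNQ : ((N : ℚ) : ℝ) ≠ 0 := by exact_mod_cast hNne
  have hNQ' : (N : ℚ) ≠ 0 := by exact_mod_cast hNne
  have hεinveq : ε⁻¹ = (((t : ℚ) / N : ℚ) : ℝ) + (((-u : ℚ) / N : ℚ) : ℝ) * Real.sqrt p := by
    apply inv_eq_of_mul_eq_one_right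
    have : (((t : ℚ) / N : ℚ) : ℝ) + (((-u : ℚ) / N : ℚ) : ℝ) * Real.sqrt p
        = ((t : ℝ) - (u : ℝ) * Real.sqrt p) / (N : ℝ) := by
      push_cast; ring
    rw [this, mul_div_assoc', hconj]
    field_simp
  obtain ⟨t', u', ht', hu'⟩ := coords_int p hp hp4 ((t : ℚ) / N) ((-u : ℚ) / N)
    (by rw [← hεinveq]; exact hεinvint)
  have ht2 : t = N * t' := by
    have : (t : ℚ) = (N : ℚ) * (t' : ℚ) := by
      field_simp at ht'
      linarith [ht']
    exact_mod_cast this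
  have hu2 : u = -(N * u') := by
    have : (-u : ℚ) = (N : ℚ) * (u' : ℚ) := by
      field_simp at hu'
      linarith [hu']
    have h2 : (u : ℚ) = -((N : ℚ) * (u' : ℚ)) := by linarith
    exact_mod_cast h2
  have hNunit : N = 1 ∨ N = -1 := by
    have e1 : t ^ 2 = N ^ 2 * t' ^ 2 := by rw [ht2]; ring
    have e2 : u ^ 2 = N ^ 2 * u' ^ 2 := by rw [hu2]; ring
    have hNN : N * (N * (t' ^ 2 - (p : ℤ) * u' ^ 2)) = N * 1 := by
      calc N * (N * (t' ^ 2 - (p : ℤ) * u' ^ 2))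
          = N ^ 2 * t' ^ 2 - (p : ℤ) * (N ^ 2 * u' ^ 2) := by ring
        _ = t ^ 2 - (p : ℤ) * u ^ 2 := by rw [← e1, ← e2]
        _ = N := hNdef.symm
        _ = N * 1 := by ring
    have := mul_left_cancel₀ hNne hNN
    exact Int.isUnit_iff.mp (IsUnit.of_mul_eq_one _ this)
  have hNone : N = 1 := by
    rcases hNunit with h | h
    · exact h
    · exact absurd (by rw [← hNdef, h] : t ^ 2 - (p:ℤ) * u ^ 2 = -1)
        (fun hh => norm_neg_one_impossible p t u (by omega) hh)
  have hnorm : t ^ 2 - (p : ℤ) * u ^ 2 = 1 := by rw [← hNdef, hNone]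
  have hinv2 : ε⁻¹ = (t : ℝ) - (u : ℝ) * Real.sqrt p := by
    apply inv_eq_of_mul_eq_one_right
    rw [hconj, hNone]
    norm_num
  have hεpos : (0:ℝ) < ε := by linarith
  have hinvpos : 0 < ε⁻¹ := by positivity
  have hinvlt : ε⁻¹ < 1 := by
    have hme : ε * ε⁻¹ = 1 := mul_inv_cancel₀ hεne
    nlinarith
  have htpos : 1 ≤ t := by
    have h1 : (0 : ℝ) < (t : ℝ) := by
      have : 2 * (t : ℝ) = ε + ε⁻¹ := by rw [hinv2, hεeq]; ring
      nlinarith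
    have : 0 < t := by exact_mod_cast h1
    omega
  have hupos : 1 ≤ u := by
    have h1 : (0 : ℝ) < (u : ℝ) * Real.sqrt p := by
      have : 2 * ((u : ℝ) * Real.sqrt p) = ε - ε⁻¹ := by rw [hinv2, hεeq]; ring
      nlinarith
    have h2 : (0 : ℝ) < (u : ℝ) := by
      by_contra hc
      push_neg at hc
      nlinarith
    have : 0 < u := by exact_mod_cast h2
    omega
  have hp3 : (3 : ℤ) ≤ (p : ℤ) := by omega
  have ht2' : 2 ≤ t := by nlinarith
  have hfac : (t - 1) * (t + 1) = (p : ℤ) * u ^ 2 := by linarith [hnorm]; 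
  have hpZ : Prime ((p : ℕ) : ℤ) := Nat.prime_iff_prime_int.mp hp
  have hpZne : ((p : ℕ) : ℤ) ≠ 0 := by positivity
  rcases Int.emod_two_eq t with hteven | htodd
  · -- t even: conclusion cases
    have cop : IsCoprime (t - 1) (t + 1) := by
      obtain ⟨m, hm⟩ : ∃ m, t = 2 * m := ⟨t / 2, by omega⟩
      exact ⟨m, -(m - 1), by rw [hm]; ring⟩
    have hpd : ((p : ℕ) : ℤ) ∣ (t - 1) * (t + 1) := ⟨u ^ 2, hfac⟩
    have key : ∃ a b : ℤ, Odd a ∧ Odd b ∧ ((p:ℤ) * a ^ 2 + b ^ 2 = 2 * t) ∧ u = a * b ∧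
        (a ^ 2 * (p : ℤ) - b ^ 2 = 2 ∨ a ^ 2 * (p : ℤ) - b ^ 2 = -2) := by
      rcases hpZ.dvd_mul.mp hpd with hd | hd
      · -- p ∣ t - 1
        obtain ⟨k, hk⟩ := hd
        have hkpos : 0 < k := by nlinarith
        have hcan : k * (t + 1) = u ^ 2 := by
          apply mul_left_cancel₀ hpZne
          rw [← mul_assoc, ← hk, hfac]
        have copk : IsCoprime k (t + 1) :=
          cop.of_isCoprime_of_dvd_left ⟨(p : ℤ), by rw [hk]; ring⟩
        obtain ⟨a, b, hka, htb, huv⟩ := coprime_sq_split k (t + 1) u copk hcan hkpos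
          (by omega)
        have haodd : Odd a := by
          rcases Int.even_or_odd a with he | ho
          · obtain ⟨w, hw⟩ := he
            exfalso
            have : t - 1 = 4 * ((p : ℤ) * w ^ 2) := by rw [hk, hka, hw]; ring
            omega
          · exact ho
        have hbodd : Odd b := by
          rcases Int.even_or_odd b with he | ho
          · obtain ⟨w, hw⟩ := he
            exfalso
            have : t + 1 = 4 * (w ^ 2) := by rw [htb, hw]; ring
            omega
          · exact ho
        refine ⟨a, b, haodd, hbodd, ?_, huv, Or.inr ?_⟩
        · have h1 : (p : ℤ) * a ^ 2 = t - 1 := by rw [← hka, ← hk]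
          linarith [htb]
        · have h1 : (p : ℤ) * a ^ 2 = t - 1 := by rw [← hka, ← hk]
          linarith [htb]
      · -- p ∣ t + 1
        obtain ⟨k, hk⟩ := hd
        have hkpos : 0 < k := by nlinarith
        have hcan : k * (t - 1) = u ^ 2 := by
          apply mul_left_cancel₀ hpZne
          rw [← mul_assoc, ← hk]
          rw [mul_comm (t-1) (t+1)] at hfac
          exact hfac
        have copk : IsCoprime k (t - 1) :=
          cop.symm.of_isCoprime_of_dvd_left ⟨(p : ℤ), by rw [hk]; ring⟩
        obtain ⟨a, b, hka, htb, huv⟩ := coprime_sq_split k (t - 1) u copk hcan hkpos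
          (by omega)
        have haodd : Odd a := by
          rcases Int.even_or_odd a with he | ho
          · obtain ⟨w, hw⟩ := he
            exfalso
            have : t + 1 = 4 * ((p : ℤ) * w ^ 2) := by rw [hk, hka, hw]; ring
            omega
          · exact ho
        have hbodd : Odd b := by
          rcases Int.even_or_odd b with he | ho
          · obtain ⟨w, hw⟩ := he
            exfalso
            have : t - 1 = 4 * (w ^ 2) := by rw [htb, hw]; ring
            omega
          · exact ho
        refine ⟨a, b, haodd, hbodd, ?_, huv, Or.inl ?_⟩
        · have h1 : (p : ℤ) * a ^ 2 = t + 1 := by rw [← hka, ← hk]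
          linarith [htb]
        · have h1 : (p : ℤ) * a ^ 2 = t + 1 := by rw [← hka, ← hk]
          linarith [htb]
    obtain ⟨a, b, ha, hb, h2t, huab, hcval⟩ := key
    refine ⟨a, b, ha, hb, ?_, ?_⟩
    · rw [hεeq]
      have hc1 : ((p:ℤ) * a ^ 2 + b ^ 2 : ℤ) = ((2 * t : ℤ)) := h2t
      have hc2 : ((((p:ℤ)) * a ^ 2 + b ^ 2 : ℤ) : ℝ) = ((2 * t : ℤ) : ℝ) := by
        exact_mod_cast hc1
      have hc3 : ((u : ℤ) : ℝ) = ((a * b : ℤ) : ℝ) := by exact_mod_cast huab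
      push_cast at hc2 hc3 ⊢
      rw [hc3]
      linarith [hc2]
    · rcases hcval with hcv | hcv
      · rw [hcv]; exact endgame p a b 2 ha hb hcv (Or.inl rfl)
      · rw [hcv]; exact endgame p a b (-2) ha hb hcv (Or.inr rfl)
  · -- t odd: contradiction with fundamentality
    exfalso
    have hueven : u % 2 = 0 := by
      rcases Int.emod_two_eq u with h | h
      · exact h
      · exfalso
        have hot : Odd t := Int.odd_iff.mpr htodd
        have hou : Odd u := Int.odd_iff.mpr h
        have hop : Odd ((p : ℕ) : ℤ) := Int.odd_iff.mpr (by omega)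
        have heven : Even (t ^ 2 - (p : ℤ) * u ^ 2) :=
          (hot.pow).sub_odd (hop.mul (hou.pow))
        rw [hnorm] at heven
        have hbad := Int.even_iff.mp heven
        norm_num at hbad
    obtain ⟨v, hv⟩ : ∃ v, u = 2 * v := ⟨u / 2, by omega⟩
    obtain ⟨m, hm⟩ : ∃ m, t = 2 * m + 1 := ⟨t / 2, by omega⟩
    have hm1 : 1 ≤ m := by omega
    have hfac2 : m * (m + 1) = (p : ℤ) * v ^ 2 := by
      have h4 : (2 * m + 1) ^ 2 - (p : ℤ) * (2 * v) ^ 2 = 1 := by rw [← hm, ← hv]; exact hnorm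
      have h5 : 4 * (m * (m + 1)) = 4 * ((p : ℤ) * v ^ 2) := by linear_combination h4
      linarith
    have cop : IsCoprime m (m + 1) := ⟨-1, 1, by ring⟩
    have hpd : ((p : ℕ) : ℤ) ∣ m * (m + 1) := ⟨v ^ 2, hfac2⟩
    have key : ∃ a b : ℤ, b ^ 2 + (p:ℤ) * a ^ 2 = t ∧ v = a * b ∧
        (b ^ 2 - (p:ℤ) * a ^ 2 = 1 ∨ b ^ 2 - (p:ℤ) * a ^ 2 = -1) := by
      rcases hpZ.dvd_mul.mp hpd with hd | hd
      · -- p ∣ m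
        obtain ⟨k, hk⟩ := hd
        have hkpos : 0 < k := by nlinarith
        have hcan : k * (m + 1) = v ^ 2 := by
          apply mul_left_cancel₀ hpZne
          rw [← mul_assoc, ← hk, hfac2]
        have copk : IsCoprime k (m + 1) :=
          cop.of_isCoprime_of_dvd_left ⟨(p : ℤ), by rw [hk]; ring⟩
        obtain ⟨a, b, hka, hmb, hvab⟩ := coprime_sq_split k (m + 1) v copk hcan hkpos
          (by omega)
        refine ⟨a, b, ?_, hvab, Or.inl ?_⟩
        · have h1 : (p : ℤ) * a ^ 2 = m := by rw [← hka, ← hk]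
          rw [hm]; linarith [hmb]
        · have h1 : (p : ℤ) * a ^ 2 = m := by rw [← hka, ← hk]
          linarith [hmb]
      · -- p ∣ m + 1
        obtain ⟨k, hk⟩ := hd
        have hkpos : 0 < k := by nlinarith
        have hcan : k * m = v ^ 2 := by
          apply mul_left_cancel₀ hpZne
          rw [← mul_assoc, ← hk]
          rw [mul_comm m (m+1)] at hfac2
          exact hfac2
        have copk : IsCoprime k m :=
          cop.symm.of_isCoprime_of_dvd_left ⟨(p : ℤ), by rw [hk]; ring⟩
        obtain ⟨a, b, hka, hmb, hvab⟩ := coprime_sq_split k m v copk hcan hkpos (by omega)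
        refine ⟨a, b, ?_, hvab, Or.inr ?_⟩
        · have h1 : (p : ℤ) * a ^ 2 = m + 1 := by rw [← hka, ← hk]
          rw [hm]; linarith [hmb]
        · have h1 : (p : ℤ) * a ^ 2 = m + 1 := by rw [← hka, ← hk]
          linarith [hmb]
    obtain ⟨a, b, hab, hvab, hnb⟩ := key
    set η : ℝ := (b : ℝ) + (a : ℝ) * Real.sqrt p with hηdef
    have hηsq : η ^ 2 = ε := by
      rw [hηdef, hεeq]
      have hc1 : ((b ^ 2 + (p:ℤ) * a ^ 2 : ℤ) : ℝ) = ((t : ℤ) : ℝ) := by exact_mod_cast hab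
      have hc2 : ((u : ℤ) : ℝ) = ((2 * (a * b) : ℤ) : ℝ) := by
        rw [hv, hvab]
      push_cast at hc1 hc2 ⊢
      rw [hc2]
      linear_combination hc1 + (a : ℝ) ^ 2 * hsq
    have hunit : isQuadUnit (p : ℝ) η := by
      rcases hnb with h1 | h1
      · exact quad_unit_mk p hppos a b 1 (Or.inl rfl) h1
      · exact quad_unit_mk p hppos a b (-1) (Or.inr rfl) h1
    exact no_sqrt_fund (p : ℝ) ε η hε hfund' hunit hηsq
end
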